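/- For |q| < 1 (or as formal power series in q), the generating function for b(n) satisfies ∑_{n≥1} b(n) q^n = ∑_{m≥1} (q^m/(1−q^m)) · (−q;q)_{m−1}. -/

import Mathlib

open Finset

/-- The smallest part of a partition. -/
noncomputable def Nat.Partition.minPart {n : ℕ} (π : n.Partition) : ℕ :=
  sInf {i | i ∈ π.parts}

/-- `b n` is the sum of the smallest parts over all partitions of `n` into distinct
parts having an odd number of parts. -/
noncomputable def b (n : ℕ) : ℕ :=
  letI := Classical.decPred fun π : n.Partition => Odd (Multiset.card π.parts)
  ∑ π ∈ (Nat.Partition.distincts n).filter fun π => Odd (Multiset.card π.parts),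
    π.minPart

namespace BGenAux

/-- counting function: `G M V L = ∑_{ρ ∈ V} ⌊(L-ρ)/M⌋`. -/
def G (M : ℕ) (V : Finset ℕ) (L : ℕ) : ℕ := ∑ ρ ∈ V, (L - ρ) / M

lemma G_mono (M : ℕ) (V : Finset ℕ) {L L' : ℕ} (h : L ≤ L') : G M V L ≤ G M V L' :=
  Finset.sum_le_sum fun ρ _ => Nat.div_le_div_right (by omega)

lemma dvd_iff_mod_eq {M L ρ : ℕ} (hρ : ρ < M) (hL : ρ ≤ L) :
    M ∣ L - ρ ↔ L % M = ρ := by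
  constructor
  · rintro ⟨c, hc⟩
    have : L = ρ + M * c := by omega
    subst this
    simp [Nat.add_mul_mod_self_left, Nat.mod_eq_of_lt hρ]
  · intro h
    have h2 := Nat.div_add_mod L M
    exact ⟨L / M, by omega⟩

lemma G_succ (M : ℕ) (V : Finset ℕ) (hV : ∀ ρ ∈ V, ρ < M) {L : ℕ} (hL : M ≤ L) :
    G M V (L + 1) = G M V L + (if (L + 1) % M ∈ V then 1 else 0) := by
  have key : ∀ ρ ∈ V, (L + 1 - ρ) / M = (L - ρ) / M + (if (L+1) % M = ρ then 1 else 0) := by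
    intro ρ hρ
    have hρM := hV ρ hρ
    have h1 : L + 1 - ρ = (L - ρ) + 1 := by omega
    rw [h1, Nat.succ_div]
    congr 1
    have : M ∣ L - ρ + 1 ↔ (L+1) % M = ρ := by
      have : L - ρ + 1 = L + 1 - ρ := by omega
      rw [this, dvd_iff_mod_eq hρM (by omega)]
    simp only [this]
  rw [G, G, Finset.sum_congr rfl key, Finset.sum_add_distrib]
  congr 1
  rw [Finset.sum_ite_eq V ((L+1) % M) (fun _ => 1)]

/-- `G` is constant on intervals with no valid point. -/
lemma G_const (M : ℕ) (V : Finset ℕ) (hV : ∀ ρ ∈ V, ρ < M) {L L' : ℕ}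
    (hL : M ≤ L) (h : L ≤ L') (hno : ∀ y, L < y → y ≤ L' → y % M ∉ V) :
    G M V L' = G M V L := by
  induction L', h using Nat.le_induction with
  | base => rfl
  | succ x hx ih =>
    rw [G_succ M V hV (le_trans hL hx), ih (fun y h1 h2 => hno y h1 (by omega)),
      if_neg (hno (x+1) (by omega) le_rfl)]
    omega

lemma G_strict (M : ℕ) (V : Finset ℕ) (hM : 0 < M) (hV : ∀ ρ ∈ V, ρ < M) {L L' : ℕ}
    (hL : M ≤ L) (hlt : L < L') (hval : L' % M ∈ V) : G M V L < G M V L' := by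
  have h1 : L ≤ L' - 1 := by omega
  have h2 : G M V L ≤ G M V (L' - 1) := G_mono M V h1
  have h3 : G M V ((L' - 1) + 1) = G M V (L' - 1) + 1 := by
    rw [G_succ M V hV (by omega)]
    rw [if_pos (by rwa [show L' - 1 + 1 = L' by omega])]
  rw [show L' - 1 + 1 = L' by omega] at h3
  omega

lemma exists_valid (M : ℕ) (V : Finset ℕ) (hM : 0 < M) (hV : ∀ ρ ∈ V, ρ < M)
    (hne : V.Nonempty) {j : ℕ} (hj : 1 ≤ j) :
    ∃ L, M ≤ L ∧ L % M ∈ V ∧ G M V L = j := by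
  induction j, hj using Nat.le_induction with
  | base =>
    refine ⟨M + V.min' hne, by omega, ?_, ?_⟩
    · rw [Nat.add_mod_left, Nat.mod_eq_of_lt (hV _ (V.min'_mem hne))]
      exact V.min'_mem hne
    · rw [G]
      have key : ∀ ρ ∈ V, (M + V.min' hne - ρ) / M = if ρ = V.min' hne then 1 else 0 := by
        intro ρ hρ
        have h1 := hV ρ hρ
        have h2 := V.min'_le ρ hρ
        have h3 := hV _ (V.min'_mem hne)
        split
        · subst ‹ρ = V.min' hne›
          simp [Nat.div_self hM]
        · have : ρ > V.min' hne := lt_of_le_of_ne h2 (Ne.symm ‹_›)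
          exact Nat.div_eq_of_lt (by omega)
      rw [Finset.sum_congr rfl key, Finset.sum_ite_eq' V (V.min' hne) (fun _ => 1),
        if_pos (V.min'_mem hne)]
  | succ j hj1 ih =>
    obtain ⟨L, hL, hval, hG⟩ := ih
    have hex : ∃ k, (L + 1 + k) % M ∈ V := by
      refine ⟨M - 1, ?_⟩
      have : L + 1 + (M - 1) = L + M := by omega
      rw [this, Nat.add_mod_right]
      exact hval
    set k₀ := Nat.find hex with hk₀
    have hspec : (L + 1 + k₀) % M ∈ V := Nat.find_spec hex
    refine ⟨L + 1 + k₀, by omega, hspec, ?_⟩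
    have hconst : G M V (L + k₀) = G M V L := by
      apply G_const M V hV hL (by omega)
      intro y h1 h2 hy
      have : ¬ ((L + 1 + (y - L - 1)) % M ∈ V) := Nat.find_min hex (by omega)
      rw [show L + 1 + (y - L - 1) = y by omega] at this
      exact this hy
    have hstep : G M V ((L + k₀) + 1) = G M V (L + k₀) + 1 := by
      rw [G_succ M V hV (by omega), if_pos (by rwa [show L + k₀ + 1 = L + 1 + k₀ by omega])]
    rw [show L + 1 + k₀ = L + k₀ + 1 by omega, hstep, hconst, hG]

/-- The set of pairs `(S, i)`. -/
def Aset (N : ℕ) : Finset (Finset ℕ × ℕ) :=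
  (((range (N+1)).powerset) ×ˢ range (N+1)).filter
    (fun x => x.1.sum id = N ∧ Odd x.1.card ∧ ∀ p ∈ x.1, x.2 < p)

/-- The set of triples `(M, j, T)` with `M, j ≥ 1`, `T ⊆ [1, M-1]`, `j*M + Σ T = N`. -/
def Bset (N : ℕ) : Finset (ℕ × ℕ × Finset ℕ) :=
  ((range (N+1)) ×ˢ (range (N+1)) ×ˢ (range (N+1)).powerset).filter
    (fun x => 1 ≤ x.1 ∧ 1 ≤ x.2.1 ∧ (∀ t ∈ x.2.2, 0 < t ∧ t < x.1) ∧
      x.2.1 * x.1 + x.2.2.sum id = N)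

lemma mem_Aset {N : ℕ} {x : Finset ℕ × ℕ} :
    x ∈ Aset N ↔ x.1 ⊆ range (N+1) ∧ x.2 < N + 1 ∧ x.1.sum id = N ∧ Odd x.1.card ∧
      ∀ p ∈ x.1, x.2 < p := by
  simp [Aset, Finset.mem_filter, Finset.mem_product, and_assoc]

lemma mem_Bset {N : ℕ} {x : ℕ × ℕ × Finset ℕ} :
    x ∈ Bset N ↔ x.1 < N + 1 ∧ x.2.1 < N+1 ∧ x.2.2 ⊆ range (N+1) ∧ 1 ≤ x.1 ∧ 1 ≤ x.2.1 ∧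
      (∀ t ∈ x.2.2, 0 < t ∧ t < x.1) ∧ x.2.1 * x.1 + x.2.2.sum id = N := by
  simp [Bset, Finset.mem_filter, Finset.mem_product, and_assoc]

section core

variable {S : Finset ℕ} {i : ℕ}

lemma sup_id_eq_max' (hne : S.Nonempty) : S.sup id = S.max' hne :=
  (Finset.sup'_eq_sup hne id).symm

lemma resid_inj (hne : S.Nonempty) (hiv : ∀ p ∈ S, i < p)
    {p p' : ℕ} (hp : p ∈ S) (hp' : p' ∈ S)
    (heq : p % (S.max' hne - i) = p' % (S.max' hne - i)) : p = p' := by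
  set L := S.max' hne with hL
  set M := L - i with hMdef
  have hiL : i < L := hiv L (S.max'_mem hne)
  have hpL : p ≤ L := S.le_max' p hp
  have hp'L : p' ≤ L := S.le_max' p' hp'
  have hip : i < p := hiv p hp
  have hip' : i < p' := hiv p' hp'
  rcases lt_trichotomy p p' with h | h | h
  · exfalso
    have hdvd : M ∣ p' - p := (Nat.modEq_iff_dvd' (le_of_lt h)).1 heq
    have : M ≤ p' - p := Nat.le_of_dvd (by omega) hdvd
    omega
  · exact h
  · exfalso
    have hdvd : M ∣ p - p' := (Nat.modEq_iff_dvd' (le_of_lt h)).1 heq.symm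
    have : M ≤ p - p' := Nat.le_of_dvd (by omega) hdvd
    omega

lemma quot_eq (hne : S.Nonempty) (hiv : ∀ p ∈ S, i < p)
    {p : ℕ} (hp : p ∈ S) :
    (S.max' hne - p % (S.max' hne - i)) / (S.max' hne - i) = p / (S.max' hne - i) := by
  set L := S.max' hne with hLdef
  set M := L - i with hMdef
  have hiL : i < L := hiv L (S.max'_mem hne)
  have hM : 0 < M := by omega
  have hpL : p ≤ L := S.le_max' p hp
  have hip : i < p := hiv p hp
  have hρp : p % M ≤ p := Nat.mod_le p M
  have h1 : L - p % M = (L - p) + (p - p % M) := by omega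
  have h2 : p - p % M = M * (p / M) := by
    have := Nat.div_add_mod p M; omega
  rw [h1, h2, Nat.add_mul_div_left _ _ hM, Nat.div_eq_of_lt (by omega : L - p < M), zero_add]

lemma G_eq (hne : S.Nonempty) (hiv : ∀ p ∈ S, i < p) :
    G (S.max' hne - i) (S.image (· % (S.max' hne - i))) (S.max' hne)
      = ∑ p ∈ S, p / (S.max' hne - i) := by
  rw [G, Finset.sum_image (fun p hp p' hp' h => resid_inj hne hiv hp hp' h)]
  exact Finset.sum_congr rfl fun p hp => quot_eq hne hiv hp

lemma S_recover (hne : S.Nonempty) (hiv : ∀ p ∈ S, i < p) :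
    S = (S.image (· % (S.max' hne - i))).image
      (fun ρ => ρ + (S.max' hne - i) * ((S.max' hne - ρ) / (S.max' hne - i))) := by
  apply Finset.eq_of_subset_of_card_le
  · intro p hp
    rw [Finset.mem_image]
    refine ⟨p % (S.max' hne - i), Finset.mem_image_of_mem _ hp, ?_⟩
    rw [quot_eq hne hiv hp]
    have := Nat.div_add_mod p (S.max' hne - i)
    omega
  · calc ((S.image (· % (S.max' hne - i))).image _).card
        ≤ (S.image (· % (S.max' hne - i))).card := Finset.card_image_le
      _ = S.card := Finset.card_image_of_injOn (fun p hp p' hp' h => resid_inj hne hiv hp hp' h)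
      _ ≤ S.card := le_rfl

lemma V_recover {V : Finset ℕ} (hodd : Odd V.card) :
    V = if Even ((V.erase 0).card) then insert 0 (V.erase 0) else V.erase 0 := by
  by_cases h0 : 0 ∈ V
  · rw [if_pos, Finset.insert_erase h0]
    rw [Finset.card_erase_of_mem h0]
    rcases hodd with ⟨k, hk⟩
    exact ⟨k, by omega⟩
  · rw [Finset.erase_eq_of_notMem h0, if_neg]
    rw [Nat.not_even_iff_odd]
    exact hodd

end core

/-- The map from pairs to triples. -/
def phi (x : Finset ℕ × ℕ) : ℕ × ℕ × Finset ℕ :=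
  (x.1.sup id - x.2, ∑ p ∈ x.1, p / (x.1.sup id - x.2),
    (x.1.image (· % (x.1.sup id - x.2))).erase 0)

lemma odd_nonempty {S : Finset ℕ} (h : Odd S.card) : S.Nonempty := by
  rw [← Finset.card_pos]
  rcases h with ⟨k, hk⟩; omega

lemma phi_maps {N : ℕ} {x : Finset ℕ × ℕ} (hx : x ∈ Aset N) : phi x ∈ Bset N := by
  obtain ⟨S, i⟩ := x
  rw [mem_Aset] at hx
  obtain ⟨hSsub, hiN, hsum, hodd, hiv⟩ := hx
  dsimp only at hSsub hiN hsum hodd hiv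
  have hne : S.Nonempty := odd_nonempty hodd
  have hsup : S.sup id = S.max' hne := sup_id_eq_max' hne
  set L := S.max' hne with hLdef
  have hLmem : L ∈ S := S.max'_mem hne
  have hiL : i < L := hiv L hLmem
  set M := L - i with hMdef
  have hM : 0 < M := by omega
  have hML : M ≤ L := by omega
  have hLN : L ≤ N := by
    calc L = id L := rfl
    _ ≤ ∑ p ∈ S, id p := Finset.single_le_sum (fun p _ => Nat.zero_le _) hLmem
    _ = N := hsum
  simp only [phi, hsup, mem_Bset, ← hMdef]
  have hsum' : ∑ p ∈ S, p = N := by rw [← hsum]; rfl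
  have hweight : (∑ p ∈ S, p / M) * M + ∑ ρ ∈ (S.image (· % M)).erase 0, ρ = N := by
    have e1 : ∑ ρ ∈ (S.image (· % M)).erase 0, ρ = ∑ ρ ∈ S.image (· % M), ρ :=
      Finset.sum_erase _ rfl
    have e2 : ∑ ρ ∈ S.image (· % M), ρ = ∑ p ∈ S, p % M :=
      Finset.sum_image (fun p hp p' hp' h => resid_inj hne hiv hp hp' h)
    have e3 : ∀ p ∈ S, p = M * (p / M) + p % M := by
      intro p _; have := Nat.div_add_mod p M; omega
    calc (∑ p ∈ S, p / M) * M + ∑ ρ ∈ (S.image (· % M)).erase 0, ρ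
        = (∑ p ∈ S, p / M) * M + ∑ p ∈ S, p % M := by rw [e1, e2]
      _ = ∑ p ∈ S, (M * (p / M) + p % M) := by
          rw [Finset.sum_add_distrib]
          congr 1
          rw [mul_comm, Finset.mul_sum]
      _ = ∑ p ∈ S, p := (Finset.sum_congr rfl e3).symm
      _ = N := hsum'
  refine ⟨by omega, ?_, ?_, by omega, ?_, ?_, ?_⟩
  · -- j < N + 1
    have : ∑ p ∈ S, p / M ≤ ∑ p ∈ S, p :=
      Finset.sum_le_sum fun p _ => Nat.div_le_self p M
    omega
  · -- T ⊆ range (N+1)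
    intro t ht
    have ht' := Finset.mem_of_mem_erase ht
    rw [Finset.mem_image] at ht'
    obtain ⟨p, _, hpt⟩ := ht'
    have : t < M := hpt ▸ Nat.mod_lt p hM
    rw [Finset.mem_range]
    omega
  · -- 1 ≤ j
    have h1 : 1 ≤ L / M := (Nat.one_le_div_iff hM).2 hML
    exact le_trans h1
      (Finset.single_le_sum (f := fun p => p / M) (fun p _ => Nat.zero_le _) hLmem)
  · -- parts of T in (0, M)
    intro t ht
    have h0 : t ≠ 0 := Finset.ne_of_mem_erase ht
    have ht' := Finset.mem_of_mem_erase ht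
    rw [Finset.mem_image] at ht'
    obtain ⟨p, _, hpt⟩ := ht'
    have : t < M := hpt ▸ Nat.mod_lt p hM
    omega
  · exact hweight

lemma image_mod_lt {S : Finset ℕ} {M : ℕ} (hM : 0 < M) :
    ∀ ρ ∈ S.image (· % M), ρ < M := by
  intro ρ hρ
  rw [Finset.mem_image] at hρ
  obtain ⟨p, _, hp⟩ := hρ
  exact hp ▸ Nat.mod_lt p hM

lemma phi_inj {N : ℕ} {x₁ x₂ : Finset ℕ × ℕ} (h₁ : x₁ ∈ Aset N) (h₂ : x₂ ∈ Aset N)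
    (heq : phi x₁ = phi x₂) : x₁ = x₂ := by
  obtain ⟨S₁, i₁⟩ := x₁; obtain ⟨S₂, i₂⟩ := x₂
  rw [mem_Aset] at h₁ h₂
  obtain ⟨-, -, hsum₁, hodd₁, hiv₁⟩ := h₁
  obtain ⟨-, -, hsum₂, hodd₂, hiv₂⟩ := h₂
  dsimp only at hsum₁ hodd₁ hiv₁ hsum₂ hodd₂ hiv₂
  have hne₁ : S₁.Nonempty := odd_nonempty hodd₁
  have hne₂ : S₂.Nonempty := odd_nonempty hodd₂
  simp only [phi, sup_id_eq_max' hne₁, sup_id_eq_max' hne₂, Prod.mk.injEq] at heq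
  obtain ⟨hMeq, hjeq, hTeq⟩ := heq
  have hiL₁ : i₁ < S₁.max' hne₁ := hiv₁ _ (S₁.max'_mem hne₁)
  have hiL₂ : i₂ < S₂.max' hne₂ := hiv₂ _ (S₂.max'_mem hne₂)
  have hM : 0 < S₁.max' hne₁ - i₁ := by omega
  have hV : S₁.image (· % (S₁.max' hne₁ - i₁)) = S₂.image (· % (S₂.max' hne₂ - i₂)) := by
    have hodd₁' : Odd (S₁.image (· % (S₁.max' hne₁ - i₁))).card := by
      rwa [Finset.card_image_of_injOn (fun p hp p' hp' h => resid_inj hne₁ hiv₁ hp hp' h)]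
    have hodd₂' : Odd (S₂.image (· % (S₂.max' hne₂ - i₂))).card := by
      rwa [Finset.card_image_of_injOn (fun p hp p' hp' h => resid_inj hne₂ hiv₂ hp hp' h)]
    rw [V_recover hodd₁', V_recover hodd₂', hTeq]
  have hG₁ := G_eq hne₁ hiv₁
  have hG₂ := G_eq hne₂ hiv₂
  -- rewrite hG₂ into the (M₁, V₁) frame
  rw [← hV, ← hMeq] at hG₂
  rw [← hMeq] at hjeq
  have hLeq : S₁.max' hne₁ = S₂.max' hne₂ := by
    have hval₁ : S₁.max' hne₁ % (S₁.max' hne₁ - i₁) ∈ S₁.image (· % (S₁.max' hne₁ - i₁)) :=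
      Finset.mem_image_of_mem _ (S₁.max'_mem hne₁)
    have hval₂ : S₂.max' hne₂ % (S₁.max' hne₁ - i₁) ∈ S₁.image (· % (S₁.max' hne₁ - i₁)) := by
      rw [hV, hMeq]
      exact Finset.mem_image_of_mem _ (S₂.max'_mem hne₂)
    have hvlt := image_mod_lt (S := S₁) hM
    rcases lt_trichotomy (S₁.max' hne₁) (S₂.max' hne₂) with h | h | h
    · exfalso
      have := G_strict _ _ hM hvlt (by omega : S₁.max' hne₁ - i₁ ≤ S₁.max' hne₁) h hval₂
      omega
    · exact h
    · exfalso
      have := G_strict _ _ hM hvlt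
        (by omega : S₁.max' hne₁ - i₁ ≤ S₂.max' hne₂) h hval₁
      omega
  have hieq : i₁ = i₂ := by omega
  have e₁ := S_recover hne₁ hiv₁
  have e₂ := S_recover hne₂ hiv₂
  rw [hV, hMeq, hLeq] at e₁
  rw [Prod.mk.injEq]
  exact ⟨e₁.trans e₂.symm, hieq⟩

lemma phi_surj {N : ℕ} {y : ℕ × ℕ × Finset ℕ} (hy : y ∈ Bset N) :
    ∃ x, ∃ hx : x ∈ Aset N, phi x = y := by
  obtain ⟨M, j, T⟩ := y
  rw [mem_Bset] at hy
  obtain ⟨hMN, hjN, hTsub, hM, hj, hT, hw⟩ := hy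
  simp only at hM hj hT hw ⊢
  have h0T : 0 ∉ T := fun h => by have := (hT 0 h).1; omega
  set V : Finset ℕ := if Even T.card then insert 0 T else T with hVdef
  have hVlt : ∀ ρ ∈ V, ρ < M := by
    intro ρ hρ
    rw [hVdef] at hρ
    split at hρ
    · rcases Finset.mem_insert.1 hρ with h | h
      · omega
      · exact (hT ρ h).2
    · exact (hT ρ hρ).2
  have hVne : V.Nonempty := by
    rw [hVdef]
    split
    · exact Finset.insert_nonempty _ _
    · rename_i h
      rw [Finset.nonempty_iff_ne_empty]
      rintro rfl
      simp at h
  have hVodd : Odd V.card := by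
    rw [hVdef]
    split
    · rw [Finset.card_insert_of_notMem h0T]
      rename_i h
      rcases h with ⟨k, hk⟩
      exact ⟨k, by omega⟩
    · rwa [← Nat.not_even_iff_odd]
  have hVerase : V.erase 0 = T := by
    rw [hVdef]
    split
    · exact Finset.erase_insert h0T
    · exact Finset.erase_eq_of_notMem h0T
  have hVsum : ∑ ρ ∈ V, ρ = ∑ t ∈ T, t := by
    rw [hVdef]
    split
    · rw [Finset.sum_insert h0T, zero_add]
    · rfl
  obtain ⟨L, hML, hval, hG⟩ := exists_valid M V (by omega) hVlt hVne hj
  -- the reconstructed parts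
  set pF : ℕ → ℕ := fun ρ => ρ + M * ((L - ρ) / M) with hpFdef
  have hpF_mod : ∀ ρ ∈ V, pF ρ % M = ρ := by
    intro ρ hρ
    rw [hpFdef]
    simp only [Nat.add_mul_mod_self_left]
    exact Nat.mod_eq_of_lt (hVlt ρ hρ)
  have hpF_inj : ∀ ρ ∈ V, ∀ ρ' ∈ V, pF ρ = pF ρ' → ρ = ρ' := by
    intro ρ hρ ρ' hρ' h
    rw [← hpF_mod ρ hρ, ← hpF_mod ρ' hρ', h]
  have hpF_le : ∀ ρ ∈ V, pF ρ ≤ L := by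
    intro ρ hρ
    have h1 : M * ((L - ρ) / M) ≤ L - ρ := by
      rw [mul_comm]; exact Nat.div_mul_le_self _ _
    have h2 : ρ < M := hVlt ρ hρ
    show ρ + M * ((L - ρ) / M) ≤ L
    omega
  have hpF_gt : ∀ ρ ∈ V, L - M < pF ρ := by
    intro ρ hρ
    have h1 := Nat.div_add_mod (L - ρ) M
    have h2 : (L - ρ) % M < M := Nat.mod_lt _ (by omega)
    have h3 : ρ < M := hVlt ρ hρ
    have h4 : M * ((L - ρ) / M) = (L - ρ) - (L - ρ) % M := by omega
    show L - M < ρ + M * ((L - ρ) / M)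
    omega
  have hLpF : pF (L % M) = L := by
    have h1 := Nat.div_add_mod L M
    have h2 : L - L % M = M * (L / M) := by omega
    rw [hpFdef]
    simp only [h2, Nat.mul_div_cancel_left _ (by omega : 0 < M)]
    omega
  set S : Finset ℕ := V.image pF with hSdef
  have hLS : L ∈ S := by
    rw [hSdef, Finset.mem_image]
    exact ⟨L % M, hval, hLpF⟩
  have hne : S.Nonempty := ⟨L, hLS⟩
  have hSle : ∀ p ∈ S, p ≤ L := by
    intro p hp
    rw [hSdef, Finset.mem_image] at hp
    obtain ⟨ρ, hρ, rfl⟩ := hp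
    exact hpF_le ρ hρ
  have hSgt : ∀ p ∈ S, L - M < p := by
    intro p hp
    rw [hSdef, Finset.mem_image] at hp
    obtain ⟨ρ, hρ, rfl⟩ := hp
    exact hpF_gt ρ hρ
  have hSmax : S.max' hne = L := le_antisymm (S.max'_le hne L hSle) (S.le_max' L hLS)
  have hScard : S.card = V.card := Finset.card_image_of_injOn
    (fun ρ hρ ρ' hρ' h => hpF_inj ρ hρ ρ' hρ' h)
  have hSsum : ∑ p ∈ S, p = N := by
    rw [hSdef, Finset.sum_image (fun ρ hρ ρ' hρ' h => hpF_inj ρ hρ ρ' hρ' h)]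
    have : ∑ ρ ∈ V, pF ρ = ∑ ρ ∈ V, ρ + M * ∑ ρ ∈ V, (L - ρ) / M := by
      rw [hpFdef]
      simp only
      rw [Finset.sum_add_distrib, Finset.mul_sum]
    have hGdef : ∑ ρ ∈ V, (L - ρ) / M = j := hG
    rw [this, hVsum, hGdef]
    have hid : T.sum id = ∑ t ∈ T, t := rfl
    rw [mul_comm j M] at hw
    omega
  have hLN : L ≤ N := by
    calc L ≤ ∑ p ∈ S, p := Finset.single_le_sum (f := fun p => p) (fun p _ => Nat.zero_le _) hLS
    _ = N := hSsum
  refine ⟨(S, L - M), ?_, ?_⟩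
  · rw [mem_Aset]
    refine ⟨?_, by omega, ?_, ?_, ?_⟩
    · intro p hp
      rw [Finset.mem_range]
      have := hSle p hp
      omega
    · exact hSsum
    · rwa [hScard]
    · exact fun p hp => hSgt p hp
  · -- phi (S, L - M) = (M, j, T)
    have hsup : S.sup id = L := by rw [sup_id_eq_max' hne, hSmax]
    have hM2 : L - (L - M) = M := by omega
    simp only [phi, hsup, hM2]
    refine Prod.ext rfl (Prod.ext ?_ ?_)
    · -- the j component
      simp only
      rw [hSdef, Finset.sum_image (fun ρ hρ ρ' hρ' h => hpF_inj ρ hρ ρ' hρ' h)]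
      rw [← hG]
      apply Finset.sum_congr rfl
      intro ρ hρ
      rw [hpFdef]
      simp only
      rw [Nat.add_mul_div_left _ _ (by omega : 0 < M),
        Nat.div_eq_of_lt (hVlt ρ hρ), zero_add]
    · -- the T component
      simp only
      have : S.image (· % M) = V := by
        rw [hSdef, Finset.image_image]
        rw [show ((· % M) ∘ pF) = fun ρ => pF ρ % M from rfl]
        calc V.image (fun ρ => pF ρ % M) = V.image id := Finset.image_congr hpF_mod
        _ = V := Finset.image_id
      rw [this, hVerase]

/-- Finsets representing distinct partitions with odd length. -/
def FS (N : ℕ) : Finset (Finset ℕ) :=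
  ((range (N+1)).powerset).filter (fun S => 0 ∉ S ∧ S.sum id = N ∧ Odd S.card)

theorem card_Aset_eq_card_Bset (N : ℕ) : (Aset N).card = (Bset N).card :=
  Finset.card_bij (fun x _ => phi x) (fun x hx => phi_maps hx)
    (fun x₁ hx₁ x₂ hx₂ h => phi_inj hx₁ hx₂ h) (fun y hy => phi_surj hy)

theorem card_Aset_eq_sum (N : ℕ) :
    (Aset N).card = ∑ S ∈ FS N, sInf {i : ℕ | i ∈ S} := by
  rw [Finset.card_eq_sum_card_fiberwise (f := Prod.fst) (t := FS N) ?H]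
  case H =>
    intro x hx
    rw [Finset.mem_coe, mem_Aset] at hx
    obtain ⟨h1, h2, h3, h4, h5⟩ := hx
    rw [Finset.mem_coe, FS, Finset.mem_filter, Finset.mem_powerset]
    refine ⟨h1, fun h0 => ?_, h3, h4⟩
    · have := h5 0 h0; omega
  apply Finset.sum_congr rfl
  intro S hS
  rw [FS, Finset.mem_filter, Finset.mem_powerset] at hS
  obtain ⟨hsub, h0S, hsum, hodd⟩ := hS
  have hne : S.Nonempty := odd_nonempty hodd
  have hsetne : {i : ℕ | i ∈ S}.Nonempty := ⟨hne.choose, hne.choose_spec⟩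
  set mn := sInf {i : ℕ | i ∈ S} with hmndef
  have hmn : mn ∈ S := Nat.sInf_mem hsetne
  have hmn_le : ∀ p ∈ S, mn ≤ p := fun p hp => Nat.sInf_le hp
  have hmnN : mn ≤ N := by
    have := hsub hmn
    rw [Finset.mem_range] at this
    omega
  have hfib : (Aset N).filter (fun x => x.1 = S) = {S} ×ˢ range mn := by
    ext x
    rw [Finset.mem_filter, mem_Aset, Finset.mem_product, Finset.mem_singleton,
      Finset.mem_range]
    constructor
    · rintro ⟨⟨h1, h2, h3, h4, h5⟩, rfl⟩
      exact ⟨rfl, h5 mn hmn⟩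
    · rintro ⟨rfl, hlt⟩
      exact ⟨⟨hsub, by omega, hsum, hodd, fun p hp => lt_of_lt_of_le hlt (hmn_le p hp)⟩, rfl⟩
  rw [hfib, Finset.card_product, Finset.card_singleton, Finset.card_range, one_mul]

theorem b_eq_sum (N : ℕ) : b N = ∑ S ∈ FS N, sInf {i : ℕ | i ∈ S} := by
  rw [b, Finset.filter_congr_decidable]
  refine Finset.sum_bij (fun π _ => π.parts.toFinset) ?_ ?_ ?_ ?_
  · intro π hπ
    rw [Finset.mem_filter] at hπ
    obtain ⟨hd, hodd⟩ := hπ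
    rw [Nat.Partition.distincts, Finset.mem_filter] at hd
    have hnodup : π.parts.Nodup := hd.2
    have hval : π.parts.toFinset.val = π.parts := by
      rw [Multiset.toFinset_val, Multiset.dedup_eq_self.2 hnodup]
    have hcard : π.parts.toFinset.card = Multiset.card π.parts := by
      rw [Finset.card, hval]
    have hsum : π.parts.toFinset.sum id = N := by
      have h1 : π.parts.toFinset.sum id = (π.parts.toFinset.val.map id).sum := rfl
      rw [h1, Multiset.map_id, hval, π.parts_sum]
    rw [FS, Finset.mem_filter, Finset.mem_powerset]
    refine ⟨?_, ?_, hsum, by rwa [hcard]⟩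
    · intro p hp
      rw [Multiset.mem_toFinset] at hp
      have hpos := π.parts_pos hp
      have hle : p ≤ π.parts.sum := Multiset.single_le_sum (fun x _ => Nat.zero_le x) p hp
      rw [π.parts_sum] at hle
      rw [Finset.mem_range]
      omega
    · intro h0
      rw [Multiset.mem_toFinset] at h0
      have := π.parts_pos h0
      omega
  · intro π₁ hπ₁ π₂ hπ₂ h
    rw [Finset.mem_filter, Nat.Partition.distincts, Finset.mem_filter] at hπ₁ hπ₂
    have hval₁ : π₁.parts.toFinset.val = π₁.parts := by
      rw [Multiset.toFinset_val, Multiset.dedup_eq_self.2 hπ₁.1.2]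
    have hval₂ : π₂.parts.toFinset.val = π₂.parts := by
      rw [Multiset.toFinset_val, Multiset.dedup_eq_self.2 hπ₂.1.2]
    apply Nat.Partition.ext
    rw [← hval₁, ← hval₂, h]
  · intro S hS
    rw [FS, Finset.mem_filter, Finset.mem_powerset] at hS
    obtain ⟨hsub, h0S, hsum, hodd⟩ := hS
    have hsum' : S.val.sum = N := by
      have h1 : S.sum id = (S.val.map id).sum := rfl
      rw [h1, Multiset.map_id] at hsum
      exact hsum
    refine ⟨⟨S.val, ?_, hsum'⟩, ?_, ?_⟩
    · intro p hp
      have hp' : p ∈ S := hp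
      have : p ≠ 0 := fun h => h0S (h ▸ hp')
      omega
    · rw [Finset.mem_filter, Nat.Partition.distincts, Finset.mem_filter]
      refine ⟨⟨Finset.mem_univ _, S.nodup⟩, ?_⟩
      show Odd (Multiset.card S.val)
      exact hodd
    · show (Multiset.toFinset S.val) = S
      exact S.val_toFinset
  · intro π hπ
    rw [Nat.Partition.minPart]
    congr 1
    ext i
    simp [Multiset.mem_toFinset]

theorem b_eq_card_Bset (N : ℕ) : b N = (Bset N).card := by
  rw [b_eq_sum, ← card_Aset_eq_sum, card_Aset_eq_card_Bset]

section analysis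

lemma image_add_one_range (m : ℕ) : (range m).image (· + 1) = Icc 1 m := by
  ext t
  simp only [Finset.mem_image, Finset.mem_range, Finset.mem_Icc]
  constructor
  · rintro ⟨k, hk, rfl⟩; omega
  · intro h; exact ⟨t - 1, by omega, by omega⟩

lemma prod_one_add {R : Type*} [CommRing R] (z : R) (m : ℕ) :
    ∏ k ∈ range m, (1 + z ^ (k+1)) = ∑ T ∈ (Icc 1 m).powerset, z ^ (T.sum id) := by
  have h1 : ∏ k ∈ range m, (1 + z ^ (k+1)) = ∏ t ∈ Icc 1 m, (z ^ t + 1) := by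
    rw [← image_add_one_range m, Finset.prod_image (by intro a _ c _ h; have h' : a + 1 = c + 1 := h; omega)]
    exact Finset.prod_congr rfl fun k _ => by rw [add_comm]
  rw [h1, Finset.prod_add]
  apply Finset.sum_congr rfl
  intro T hT
  rw [Finset.prod_const_one, mul_one, Finset.prod_pow_eq_pow_sum]
  rfl

lemma summable_pow_mul_succ {K : Type*} [NormedField K] [CompleteSpace K] {z : K}
    (hz : ‖z‖ < 1) (m : ℕ) : Summable (fun j : ℕ => z ^ ((m+1) * (j+1))) := by
  have hnorm : ‖z ^ (m+1)‖ < 1 := by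
    rw [norm_pow]; exact pow_lt_one₀ (norm_nonneg z) hz (Nat.succ_ne_zero m)
  have heq : (fun j : ℕ => z ^ ((m+1) * (j+1))) = fun j => z ^ (m+1) * (z ^ (m+1)) ^ j := by
    funext j
    rw [pow_mul, pow_succ, mul_comm]
  rw [heq]
  exact (summable_geometric_of_norm_lt_one hnorm).mul_left _

lemma tsum_pow_mul_succ {K : Type*} [NormedField K] [CompleteSpace K] {z : K}
    (hz : ‖z‖ < 1) (m : ℕ) :
    ∑' j : ℕ, z ^ ((m+1) * (j+1)) = z ^ (m+1) / (1 - z ^ (m+1)) := by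
  have hnorm : ‖z ^ (m+1)‖ < 1 := by
    rw [norm_pow]; exact pow_lt_one₀ (norm_nonneg z) hz (Nat.succ_ne_zero m)
  calc ∑' j : ℕ, z ^ ((m+1) * (j+1))
      = ∑' j : ℕ, z ^ (m+1) * (z ^ (m+1)) ^ j := by
        apply tsum_congr; intro j
        rw [pow_mul, pow_succ, mul_comm]
    _ = z ^ (m+1) * (1 - z ^ (m+1))⁻¹ := by
        rw [tsum_mul_left, tsum_geometric_of_norm_lt_one hnorm]
    _ = z ^ (m+1) / (1 - z ^ (m+1)) := (div_eq_mul_inv _ _).symm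

/-- Global summand function over triples (statement-indexed). -/
def Fc (q : ℂ) (y : ℕ × ℕ × Finset ℕ) : ℂ :=
  if y.2.2 ⊆ Icc 1 y.1 then q ^ ((y.1+1) * (y.2.1+1) + y.2.2.sum id) else 0

def Fr (x : ℝ) (y : ℕ × ℕ × Finset ℕ) : ℝ :=
  if y.2.2 ⊆ Icc 1 y.1 then x ^ ((y.1+1) * (y.2.1+1) + y.2.2.sum id) else 0

lemma Fr_nonneg {x : ℝ} (hx : 0 ≤ x) (y : ℕ × ℕ × Finset ℕ) : 0 ≤ Fr x y := by
  rw [Fr]; split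
  · positivity
  · exact le_refl 0

lemma norm_Fc (q : ℂ) (y : ℕ × ℕ × Finset ℕ) : ‖Fc q y‖ = Fr ‖q‖ y := by
  rw [Fc, Fr]; split
  · rw [norm_pow]
  · rw [norm_zero]

section realbounds

variable {x : ℝ} (hx0 : 0 ≤ x) (hx1 : x < 1)

lemma normx (hx0 : 0 ≤ x) : ‖x‖ = x := by rw [Real.norm_eq_abs, abs_of_nonneg hx0]

include hx0 hx1

lemma C_le (m : ℕ) :
    ∑ T ∈ (Icc 1 m).powerset, x ^ (T.sum id) ≤ Real.exp (x * (1-x)⁻¹) := by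
  rw [← prod_one_add]
  calc ∏ k ∈ range m, (1 + x ^ (k+1))
      ≤ ∏ k ∈ range m, Real.exp (x ^ (k+1)) := by
        apply Finset.prod_le_prod
        · intro k _; positivity
        · intro k _
          have := Real.add_one_le_exp (x ^ (k+1))
          linarith
    _ = Real.exp (∑ k ∈ range m, x ^ (k+1)) := (Real.exp_sum _ _).symm
    _ ≤ Real.exp (x * (1-x)⁻¹) := by
        rw [Real.exp_le_exp]
        have h1 : ∑ k ∈ range m, x ^ (k+1) = x * ∑ k ∈ range m, x ^ k := by
          rw [Finset.mul_sum]
          exact Finset.sum_congr rfl fun k _ => by rw [pow_succ, mul_comm]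
        rw [h1]
        have h2 : ∑ k ∈ range m, x ^ k ≤ (1-x)⁻¹ := by
          rw [← tsum_geometric_of_lt_one hx0 hx1]
          exact Summable.sum_le_tsum _ (fun i _ => pow_nonneg hx0 i)
            (summable_geometric_of_lt_one hx0 hx1)
        exact mul_le_mul_of_nonneg_left h2 hx0

lemma C_nonneg (m : ℕ) : 0 ≤ ∑ T ∈ (Icc 1 m).powerset, x ^ (T.sum id) :=
  Finset.sum_nonneg fun T _ => pow_nonneg hx0 _

lemma Fr_tsum_T (m j : ℕ) :
    ∑' T : Finset ℕ, Fr x (m, j, T)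
      = x ^ ((m+1) * (j+1)) * ∑ T ∈ (Icc 1 m).powerset, x ^ (T.sum id) := by
  rw [tsum_eq_sum (s := (Icc 1 m).powerset)
    (fun T hT => by rw [Fr]; exact if_neg (by simpa using hT)), Finset.mul_sum]
  apply Finset.sum_congr rfl
  intro T hT
  rw [Fr, if_pos (by simpa using hT), pow_add]

lemma Fr_summable_jT (m : ℕ) : Summable (fun y : ℕ × Finset ℕ => Fr x (m, y)) := by
  rw [summable_prod_of_nonneg (fun y => Fr_nonneg hx0 _)]
  constructor
  · intro j
    apply summable_of_ne_finset_zero (s := (Icc 1 m).powerset)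
    intro T hT
    rw [Fr]; exact if_neg (by simpa using hT)
  · apply Summable.congr
      (f := fun j => x ^ ((m+1) * (j+1)) * ∑ T ∈ (Icc 1 m).powerset, x ^ (T.sum id))
    · exact ((summable_pow_mul_succ (K := ℝ) (by rwa [normx hx0]) m).mul_right _)
    · intro j
      exact (Fr_tsum_T hx0 hx1 m j).symm

lemma Fr_tsum_jT (m : ℕ) :
    ∑' y : ℕ × Finset ℕ, Fr x (m, y)
      = (x ^ (m+1) / (1 - x ^ (m+1))) * ∑ T ∈ (Icc 1 m).powerset, x ^ (T.sum id) := by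
  rw [Summable.tsum_prod (Fr_summable_jT hx0 hx1 m)]
  calc ∑' j : ℕ, ∑' T : Finset ℕ, Fr x (m, j, T)
      = ∑' j : ℕ, x ^ ((m+1) * (j+1)) * ∑ T ∈ (Icc 1 m).powerset, x ^ (T.sum id) :=
        tsum_congr fun j => Fr_tsum_T hx0 hx1 m j
    _ = (∑' j : ℕ, x ^ ((m+1) * (j+1))) * ∑ T ∈ (Icc 1 m).powerset, x ^ (T.sum id) :=
        tsum_mul_right
    _ = _ := by rw [tsum_pow_mul_succ (by rwa [normx hx0]) m]

lemma Fr_summable : Summable (Fr x) := by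
  rw [summable_prod_of_nonneg (Fr_nonneg hx0)]
  refine ⟨Fr_summable_jT hx0 hx1, ?_⟩
  apply Summable.of_nonneg_of_le
    (g := fun m => ∑' y : ℕ × Finset ℕ, Fr x (m, y))
    (f := fun m => ((1-x)⁻¹ * Real.exp (x * (1-x)⁻¹) * x) * x ^ m)
  · intro m
    exact tsum_nonneg fun y => Fr_nonneg hx0 _
  · intro m
    rw [Fr_tsum_jT hx0 hx1 m]
    have hx1m : x ^ (m+1) ≤ x := by
      calc x ^ (m+1) ≤ x ^ 1 := pow_le_pow_of_le_one hx0 (le_of_lt hx1) (by omega)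
        _ = x := pow_one x
    have hpos : (0:ℝ) < 1 - x := by linarith
    have hpos2 : (0:ℝ) < 1 - x ^ (m+1) := by
      have : x ^ (m+1) < 1 := pow_lt_one₀ hx0 hx1 (Nat.succ_ne_zero m)
      linarith
    have hdiv : x ^ (m+1) / (1 - x ^ (m+1)) ≤ x ^ (m+1) / (1 - x) := by
      rw [div_eq_mul_inv, div_eq_mul_inv]
      refine mul_le_mul_of_nonneg_left ?_ (pow_nonneg hx0 _)
      exact inv_anti₀ hpos (by linarith)
    calc x ^ (m+1) / (1 - x ^ (m+1)) * ∑ T ∈ (Icc 1 m).powerset, x ^ (T.sum id)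
        ≤ (x ^ (m+1) / (1 - x)) * Real.exp (x * (1-x)⁻¹) := by
          apply mul_le_mul hdiv (C_le hx0 hx1 m) (C_nonneg hx0 hx1 m)
          positivity
      _ = ((1-x)⁻¹ * Real.exp (x * (1-x)⁻¹) * x) * x ^ m := by
          rw [div_eq_mul_inv, pow_succ]
          ring
  · exact (summable_geometric_of_lt_one hx0 hx1).mul_left _

end realbounds

variable {q : ℂ} (hq : ‖q‖ < 1)
include hq

lemma Fc_summable : Summable (Fc q) := by
  apply Summable.of_norm
  have := Fr_summable (norm_nonneg q) hq
  exact this.congr fun y => (norm_Fc q y).symm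

lemma rhs_eq_tsum_Fc :
    ∑' m : ℕ, q ^ (m + 1) / (1 - q ^ (m + 1)) * ∏ k ∈ range m, (1 + q ^ (k + 1))
      = ∑' y : ℕ × ℕ × Finset ℕ, Fc q y := by
  rw [Summable.tsum_prod (Fc_summable hq)]
  apply tsum_congr
  intro m
  rw [Summable.tsum_prod ((Fc_summable hq).prod_factor m)]
  have hT : ∀ j : ℕ, ∑' T : Finset ℕ, Fc q (m, j, T)
      = q ^ ((m+1) * (j+1)) * ∑ T ∈ (Icc 1 m).powerset, q ^ (T.sum id) := by
    intro j
    rw [tsum_eq_sum (s := (Icc 1 m).powerset)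
      (fun T hT => by rw [Fc]; exact if_neg (by simpa using hT)), Finset.mul_sum]
    apply Finset.sum_congr rfl
    intro T hT
    rw [Fc, if_pos (by simpa using hT), pow_add]
  rw [tsum_congr hT, tsum_mul_right, tsum_pow_mul_succ hq m, prod_one_add]

/-- The sigma type of triples graded by weight. -/
abbrev BB : Type := Σ n : ℕ, {z : ℕ × ℕ × Finset ℕ // z ∈ Bset (n+1)}

def iota : BB → ℕ × ℕ × Finset ℕ := fun w => (w.2.1.1 - 1, w.2.1.2.1 - 1, w.2.1.2.2)

omit hq

lemma iota_inj : Function.Injective iota := by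
  rintro ⟨n, ⟨⟨M, j, T⟩, hmem⟩⟩ ⟨n', ⟨⟨M', j', T'⟩, hmem'⟩⟩ h
  rw [mem_Bset] at hmem hmem'
  obtain ⟨-, -, -, hM, hj, -, hw⟩ := hmem
  obtain ⟨-, -, -, hM', hj', -, hw'⟩ := hmem'
  simp only [iota, Prod.mk.injEq] at h
  dsimp only at hM hj hw hM' hj' hw'
  obtain ⟨e1, e2, e3⟩ := h
  have hMM : M = M' := by omega
  have hjj : j = j' := by omega
  subst hMM; subst hjj; subst e3
  have hnn : n = n' := by omega
  subst hnn
  rfl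

lemma Fc_comp (q : ℂ) (w : BB) : Fc q (iota w) = q ^ (w.1 + 1) := by
  obtain ⟨n, ⟨⟨M, j, T⟩, hmem⟩⟩ := w
  rw [mem_Bset] at hmem
  obtain ⟨-, -, -, hM, hj, hT, hw⟩ := hmem
  dsimp only at hM hj hT hw
  show Fc q (M - 1, j - 1, T) = q ^ (n + 1)
  rw [Fc, if_pos]
  · congr 1
    dsimp only
    have e1 : M - 1 + 1 = M := by omega
    have e2 : j - 1 + 1 = j := by omega
    rw [e1, e2, mul_comm]
    omega
  · intro t ht
    have := hT t ht
    rw [Finset.mem_Icc]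
    omega

lemma Fc_supp (q : ℂ) : Function.support (Fc q) ⊆ Set.range iota := by
  rintro ⟨m, j, T⟩ hy
  rw [Function.mem_support, Fc] at hy
  by_cases hc : T ⊆ Icc 1 m
  swap
  · exact absurd (if_neg hc) hy
  set W := (m+1) * (j+1) with hW
  refine ⟨⟨W + T.sum id - 1, ⟨(m+1, j+1, T), ?_⟩⟩, ?_⟩
  · have h1 : 1 ≤ W := Nat.one_le_iff_ne_zero.2 (by positivity)
    have h2 : m+1 ≤ W := Nat.le_mul_of_pos_right _ (by omega)
    have h3 : j+1 ≤ W := Nat.le_mul_of_pos_left _ (by omega)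
    rw [mem_Bset]
    refine ⟨?_, ?_, ?_, by dsimp only; omega, by dsimp only; omega, ?_, ?_⟩
    · dsimp only; omega
    · dsimp only; omega
    · dsimp only
      intro t ht
      have := hc ht
      rw [Finset.mem_Icc] at this
      rw [Finset.mem_range]
      omega
    · dsimp only
      intro t ht
      have := hc ht
      rw [Finset.mem_Icc] at this
      omega
    · dsimp only
      rw [mul_comm, ← hW]
      omega
  · show ((m+1) - 1, (j+1) - 1, T) = (m, j, T)
    simp

lemma Fc_zero_off_range (q : ℂ) : ∀ y ∉ Set.range iota, Fc q y = 0 := by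
  intro y hy
  by_contra h
  exact hy (Fc_supp q h)

include hq

theorem tsum_Fc_eq :
    ∑' y : ℕ × ℕ × Finset ℕ, Fc q y = ∑' n : ℕ, ((Bset (n+1)).card : ℂ) * q ^ (n + 1) := by
  rw [← iota_inj.tsum_eq (Fc_supp q)]
  have hfun : (fun w : BB => Fc q (iota w)) = fun w : BB => q ^ (w.1 + 1) :=
    funext (Fc_comp q)
  have hsum : Summable (fun w : BB => Fc q (iota w)) :=
    (iota_inj.summable_iff (Fc_zero_off_range q)).2 (Fc_summable hq)
  calc ∑' w : BB, Fc q (iota w)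
      = ∑' w : BB, q ^ (w.1 + 1) := tsum_congr fun w => Fc_comp q w
    _ = ∑' n : ℕ, ∑' z : {z : ℕ × ℕ × Finset ℕ // z ∈ Bset (n+1)}, q ^ (n + 1) := by
        rw [Summable.tsum_sigma (by rwa [hfun] at hsum : Summable fun w : BB => q ^ (w.1 + 1))]
    _ = ∑' n : ℕ, ((Bset (n+1)).card : ℂ) * q ^ (n + 1) := by
        apply tsum_congr
        intro n
        rw [tsum_fintype, Finset.sum_const, Finset.card_univ, Fintype.card_coe, nsmul_eq_mul]

end analysis

end BGenAux

/-- `∑_{n≥1} b(n) qⁿ = ∑_{m≥1} (qᵐ/(1−qᵐ)) · (−q;q)_{m−1}` for `|q| < 1`. -/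
theorem b_genFun (q : ℂ) (hq : ‖q‖ < 1) :
    ∑' n : ℕ, (b (n + 1) : ℂ) * q ^ (n + 1) =
      ∑' m : ℕ, q ^ (m + 1) / (1 - q ^ (m + 1)) *
        ∏ k ∈ range m, (1 + q ^ (k + 1)) := by
  calc ∑' n : ℕ, (b (n + 1) : ℂ) * q ^ (n + 1)
      = ∑' n : ℕ, ((BGenAux.Bset (n+1)).card : ℂ) * q ^ (n + 1) :=
        tsum_congr fun n => by rw [BGenAux.b_eq_card_Bset]
    _ = ∑' y : ℕ × ℕ × Finset ℕ, BGenAux.Fc q y := (BGenAux.tsum_Fc_eq hq).symm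
    _ = _ := (BGenAux.rhs_eq_tsum_Fc hq).symm
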